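/- The R-learner population loss identifies the CATE: suppose Y = b(X) + T·τ(X) + ε with E[ε | X, T] = 0, and let η(x) = E[Y|X=x] = b(x) + e(x)τ(x) where e(x) = P(T=1|X=x) ∈ (0,1). Then for any candidate function τ', E[((Y − η(X)) − (T − e(X))τ'(X))²] is minimized over measurable τ' at τ' = τ (up to sets where Var(T|X) · anything vanishes), since E[(Y−η(X)) − (T−e(X))τ(X) | X, T] = 0. -/

import Mathlib

open MeasureTheory

/-- The R-learner population loss identifies the CATE: under `Y = b(X) + T·τ(X) + ε` with
`E[ε|X,T] = 0`, `η(x) = b(x) + e(x)τ(x)` and overlap `0 < e(x) < 1`, the residual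
`(Y − η(X)) − (T − e(X))τ(X)` has zero conditional mean given `(X,T)`, and `τ` minimizes
the population squared loss `E[((Y − η(X)) − (T − e(X))τ'(X))²]` over measurable `τ'`. -/
theorem rlearner_loss_identifies_cate {Ω 𝒳 : Type*} {mΩ : MeasurableSpace Ω}
    [MeasurableSpace 𝒳] (μ : Measure Ω) [IsProbabilityMeasure μ]
    (X : Ω → 𝒳) (hX : Measurable X) (Tr : Ω → ℝ) (hTr : Measurable Tr)
    (hTr01 : ∀ ω, Tr ω = 0 ∨ Tr ω = 1)
    (Y : Ω → ℝ) (b τ e : 𝒳 → ℝ)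
    (hb : Measurable b) (hτ : Measurable τ) (he : Measurable e)
    (hoverlap : ∀ x, 0 < e x ∧ e x < 1)
    -- `E[ε | X, T] = 0` where `ε = Y − b(X) − T·τ(X)`
    (hε : μ[(fun ω => Y ω - (b (X ω) + Tr ω * τ (X ω))) |
        MeasurableSpace.comap (fun ω => (X ω, Tr ω)) inferInstance] =ᵐ[μ] 0)
    -- `e` is the propensity score: `E[T | X] = e(X)`
    (hprop : μ[Tr | MeasurableSpace.comap X inferInstance] =ᵐ[μ] fun ω => e (X ω))
    -- finite second moments
    (hY2 : MemLp Y 2 μ) (hb2 : MemLp (fun ω => b (X ω)) 2 μ)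
    (hτ2 : MemLp (fun ω => τ (X ω)) 2 μ) :
    (μ[(fun ω => (Y ω - (b (X ω) + e (X ω) * τ (X ω)))
          - (Tr ω - e (X ω)) * τ (X ω)) |
        MeasurableSpace.comap (fun ω => (X ω, Tr ω)) inferInstance] =ᵐ[μ] 0) ∧
    (∀ τ' : 𝒳 → ℝ, Measurable τ' →
      Integrable (fun ω => ((Y ω - (b (X ω) + e (X ω) * τ (X ω)))
          - (Tr ω - e (X ω)) * τ' (X ω)) ^ 2) μ →
      ∫ ω, ((Y ω - (b (X ω) + e (X ω) * τ (X ω)))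
          - (Tr ω - e (X ω)) * τ (X ω)) ^ 2 ∂μ ≤
        ∫ ω, ((Y ω - (b (X ω) + e (X ω) * τ (X ω)))
          - (Tr ω - e (X ω)) * τ' (X ω)) ^ 2 ∂μ) := by
  classical
  set m := MeasurableSpace.comap (fun ω => (X ω, Tr ω)) inferInstance with hm_def
  have hm : m ≤ mΩ := (hX.prodMk hTr).comap_le
  set ε : Ω → ℝ := fun ω => Y ω - (b (X ω) + Tr ω * τ (X ω)) with hεdef
  have hfun : (fun ω => (Y ω - (b (X ω) + e (X ω) * τ (X ω)))
      - (Tr ω - e (X ω)) * τ (X ω)) = ε := by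
    funext ω; simp only [hεdef]; ring
  -- ε ∈ L²
  have hTτ2 : MemLp (fun ω => Tr ω * τ (X ω)) 2 μ := by
    refine MemLp.of_le hτ2 ((hTr.mul (hτ.comp hX)).aestronglyMeasurable) ?_
    filter_upwards with ω
    rcases hTr01 ω with h | h <;> simp [h]
  have hε2 : MemLp ε 2 μ := hY2.sub (hb2.add hTτ2)
  have hεint : Integrable ε μ := hε2.integrable (by norm_num)
  refine ⟨hfun ▸ hε, ?_⟩
  intro τ' hτ' hInt
  set g : Ω → ℝ := fun ω => (Tr ω - e (X ω)) * (τ' (X ω) - τ (X ω)) with hgdef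
  set R : Ω → ℝ := fun ω => (Y ω - (b (X ω) + e (X ω) * τ (X ω)))
      - (Tr ω - e (X ω)) * τ' (X ω) with hRdef
  have hRεg : ∀ ω, R ω = ε ω - g ω := by intro ω; simp only [hRdef, hεdef, hgdef]; ring
  have hRmeas : AEStronglyMeasurable[mΩ] R μ := by
    have : AEStronglyMeasurable[mΩ] Y μ := hY2.1
    exact (this.sub (((hb.comp hX).add ((he.comp hX).mul (hτ.comp hX))).aestronglyMeasurable)).sub
      (((hTr.sub (he.comp hX)).mul (hτ'.comp hX)).aestronglyMeasurable)
  have hR2 : MemLp R 2 μ := (memLp_two_iff_integrable_sq hRmeas).mpr hInt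
  have hg2 : MemLp g 2 μ := by
    have : (fun ω => ε ω - R ω) = g := by funext ω; rw [hRεg ω]; ring
    exact this ▸ (hε2.sub hR2)
  -- g is m-measurable
  have hgm : StronglyMeasurable[m] g := by
    have hcm : Measurable[m] (fun ω => (X ω, Tr ω)) :=
      Measurable.of_comap_le (le_of_eq hm_def.symm)
    have hφ : Measurable (fun p : 𝒳 × ℝ => (p.2 - e p.1) * (τ' p.1 - τ p.1)) :=
      (measurable_snd.sub (he.comp measurable_fst)).mul
        ((hτ'.comp measurable_fst).sub (hτ.comp measurable_fst))
    exact (Measurable.stronglyMeasurable (hφ.comp hcm))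
  have hgεint : Integrable (g * ε) μ := by
    have := (hε2.smul hg2 (p := 2) (q := 2) (r := 1)
      ).integrable le_rfl
    simpa [smul_eq_mul] using this
  have hcross : ∫ ω, g ω * ε ω ∂μ = 0 := by
    have h1 : ∫ ω, (g * ε) ω ∂μ = ∫ ω, (μ[g * ε|m]) ω ∂μ := (integral_condExp hm).symm
    have h2 : μ[g * ε|m] =ᵐ[μ] 0 := by
      refine (condExp_mul_of_stronglyMeasurable_left hgm hgεint hεint).trans ?_
      filter_upwards [hε] with ω hω
      simp [hω]
    calc ∫ ω, g ω * ε ω ∂μ = ∫ ω, (μ[g * ε|m]) ω ∂μ := h1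
      _ = ∫ ω, (0 : Ω → ℝ) ω ∂μ := integral_congr_ae h2
      _ = 0 := by simp
  have hε2int : Integrable (fun ω => ε ω ^ 2) μ := hε2.integrable_sq
  have hg2int : Integrable (fun ω => g ω ^ 2) μ := hg2.integrable_sq
  have hexp : ∫ ω, R ω ^ 2 ∂μ = ∫ ω, ε ω ^ 2 ∂μ - 2 * ∫ ω, g ω * ε ω ∂μ
      + ∫ ω, g ω ^ 2 ∂μ := by
    have heq : (fun ω => R ω ^ 2) = fun ω => ε ω ^ 2 - 2 * (g ω * ε ω) + g ω ^ 2 := by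
      funext ω; rw [hRεg ω]; ring
    have h3 : Integrable (fun ω => 2 * (g ω * ε ω)) μ := by
      simpa using hgεint.const_mul 2
    have h12 : Integrable (fun ω => ε ω ^ 2 - 2 * (g ω * ε ω)) μ := hε2int.sub h3
    rw [heq, integral_add h12 hg2int, integral_sub hε2int h3, integral_const_mul]
  have hle : ∫ ω, ε ω ^ 2 ∂μ ≤ ∫ ω, R ω ^ 2 ∂μ := by
    rw [hexp, hcross]
    have : 0 ≤ ∫ ω, g ω ^ 2 ∂μ := integral_nonneg fun ω => sq_nonneg _
    linarith
  calc ∫ ω, ((Y ω - (b (X ω) + e (X ω) * τ (X ω))) - (Tr ω - e (X ω)) * τ (X ω)) ^ 2 ∂μ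
      = ∫ ω, ε ω ^ 2 ∂μ := by
        refine integral_congr_ae (Filter.Eventually.of_forall fun ω => ?_)
        simp only [hεdef]; ring
    _ ≤ ∫ ω, R ω ^ 2 ∂μ := hle
    _ = _ := rfl
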